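/- arXiv:1505.07214 — 2 statements merged into one kernel-verified Lean document; each statement's English description precedes it below -/
import Mathlib

section
/- (Gagliardo–Nirenberg inequality in the whole space.) There exists a constant C > 0 such that for every p with 2 ≤ p ≤ 6 and every continuously differentiable, compactly supported function u : ℝ³ → ℝ, one has ‖u‖_{L^p(ℝ³)} ≤ C · ‖u‖_{L²(ℝ³)}^{(3/p − 1/2)} · ‖∇u‖_{L²(ℝ³)}^{(3/2 − 3/p)}. -/
open MeasureTheory
open scoped ENNReal BigOperators

noncomputable section

/-- Euclidean space ℝ³. -/
abbrev E3 : Type := EuclideanSpace ℝ (Fin 3)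

/-- The fundamental domain [0,1)³ of the torus 𝕋³ = (ℝ/ℤ)³. -/
def T3 : Set E3 := (WithLp.equiv 2 (Fin 3 → ℝ)) ⁻¹' (Set.univ.pi fun _ => Set.Ico (0:ℝ) 1)

/-- ℤ³-periodicity: encodes that a function on ℝ³ descends to the torus 𝕋³. -/
def Torus3Periodic {F : Type*} (f : E3 → F) : Prop :=
  ∀ (x : E3) (k : Fin 3 → ℤ),
    f (x + (WithLp.equiv 2 (Fin 3 → ℝ)).symm (fun i => (k i : ℝ))) = f x

/-- The Haar measure of the torus 𝕋³ (total mass 1), realized as Lebesgue measure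
restricted to the fundamental domain. -/
def μT : Measure E3 := volume.restrict T3

/-- The i-th partial derivative of a scalar function on ℝ³. -/
def pd (i : Fin 3) (f : E3 → ℝ) (x : E3) : ℝ :=
  fderiv ℝ f x (EuclideanSpace.single i (1:ℝ))

open scoped NNReal

/-- Interpolation between L² and L⁶. -/
lemma interp_L2_L6 {u : (EuclideanSpace ℝ (Fin 3)) → ℝ}
    (hu : AEMeasurable u volume) {p : ℝ} (h2 : 2 ≤ p) (h6 : p ≤ 6) :
    eLpNorm u (ENNReal.ofReal p) volume ≤
      eLpNorm u 2 volume ^ (3/p - 1/2) * eLpNorm u 6 volume ^ (3/2 - 3/p) := by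
  have hp0 : (0:ℝ) < p := by linarith
  set a : ℝ := (6 - p)/4 with ha_def
  set b : ℝ := (p - 2)/4 with hb_def
  have ha : 0 ≤ a := by rw [ha_def]; linarith
  have hb : 0 ≤ b := by rw [hb_def]; linarith
  have hab : a + b = 1 := by rw [ha_def, hb_def]; ring
  have hf : AEMeasurable (fun x => ((‖u x‖₊ : ℝ≥0∞)) ^ (2:ℝ)) volume :=
    hu.enorm.pow_const _
  have hg : AEMeasurable (fun x => ((‖u x‖₊ : ℝ≥0∞)) ^ (6:ℝ)) volume :=
    hu.enorm.pow_const _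
  have key := ENNReal.lintegral_mul_norm_pow_le hf hg ha hb hab
  have hL : ∀ x : EuclideanSpace ℝ (Fin 3),
      ((‖u x‖₊ : ℝ≥0∞) ^ (2:ℝ)) ^ a * ((‖u x‖₊ : ℝ≥0∞) ^ (6:ℝ)) ^ b
        = (‖u x‖₊ : ℝ≥0∞) ^ p := by
    intro x
    rw [← ENNReal.rpow_mul, ← ENNReal.rpow_mul,
      ← ENNReal.rpow_add_of_nonneg _ _ (by linarith) (by linarith)]
    congr 1
    rw [ha_def, hb_def]; ring
  simp only [hL] at key
  have e1 : eLpNorm u (ENNReal.ofReal p) volume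
      = (∫⁻ x, (‖u x‖₊ : ℝ≥0∞) ^ p ∂volume) ^ (1/p) := by
    rw [eLpNorm_eq_lintegral_rpow_enorm_toReal (by simp [hp0]) (by simp),
      ENNReal.toReal_ofReal hp0.le]
    rfl
  have e2 : eLpNorm u 2 volume
      = (∫⁻ x, (‖u x‖₊ : ℝ≥0∞) ^ (2:ℝ) ∂volume) ^ (1/(2:ℝ)) := by
    rw [eLpNorm_eq_lintegral_rpow_enorm_toReal (by norm_num) (by norm_num)]
    norm_num
    rfl
  have e3 : eLpNorm u 6 volume
      = (∫⁻ x, (‖u x‖₊ : ℝ≥0∞) ^ (6:ℝ) ∂volume) ^ (1/(6:ℝ)) := by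
    rw [eLpNorm_eq_lintegral_rpow_enorm_toReal (by norm_num) (by norm_num)]
    norm_num
    rfl
  rw [e1, e2, e3]
  calc (∫⁻ x, (‖u x‖₊ : ℝ≥0∞) ^ p ∂volume) ^ (1/p)
      ≤ ((∫⁻ x, (‖u x‖₊ : ℝ≥0∞) ^ (2:ℝ) ∂volume) ^ a
          * (∫⁻ x, (‖u x‖₊ : ℝ≥0∞) ^ (6:ℝ) ∂volume) ^ b) ^ (1/p) :=
        ENNReal.rpow_le_rpow key (by positivity)
    _ = ((∫⁻ x, (‖u x‖₊ : ℝ≥0∞) ^ (2:ℝ) ∂volume) ^ (1/(2:ℝ))) ^ (3/p - 1/2)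
          * ((∫⁻ x, (‖u x‖₊ : ℝ≥0∞) ^ (6:ℝ) ∂volume) ^ (1/(6:ℝ))) ^ (3/2 - 3/p) := by
        rw [ENNReal.mul_rpow_of_nonneg _ _ (by positivity),
          ← ENNReal.rpow_mul, ← ENNReal.rpow_mul, ← ENNReal.rpow_mul, ← ENNReal.rpow_mul]
        congr 1
        · congr 1; rw [ha_def]; field_simp; ring
        · congr 1; rw [hb_def]; field_simp; ring

lemma sobolev_L6 {u : (EuclideanSpace ℝ (Fin 3)) → ℝ}
    (hu : ContDiff ℝ 1 u) (h2u : HasCompactSupport u) :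
    eLpNorm u 6 volume ≤
      (eLpNormLESNormFDerivOfEqInnerConst (volume : Measure (EuclideanSpace ℝ (Fin 3))) 2 : ℝ≥0∞)
        * eLpNorm (fderiv ℝ u) 2 volume := by
  have hn : 0 < Module.finrank ℝ (EuclideanSpace ℝ (Fin 3)) := by simp
  have hp' : (((6:ℝ≥0)) : ℝ)⁻¹ = ((2:ℝ≥0):ℝ)⁻¹
      - (Module.finrank ℝ (EuclideanSpace ℝ (Fin 3)) : ℝ)⁻¹ := by
    simp; norm_num
  have h := eLpNorm_le_eLpNorm_fderiv_of_eq_inner (μ := volume) hu h2u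
    (p := 2) (p' := 6) (by norm_num) hn hp'
  have : ((6:ℝ≥0) : ℝ≥0∞) = (6:ℝ≥0∞) := by norm_cast
  rw [this] at h
  have h2 : ((2:ℝ≥0) : ℝ≥0∞) = (2:ℝ≥0∞) := by norm_cast
  rw [h2] at h
  exact h

/-- **Gagliardo–Nirenberg inequality in the whole space ℝ³.**
There is `C > 0` such that for all `2 ≤ p ≤ 6` and all `u ∈ C¹_c(ℝ³)`,
`‖u‖_{L^p} ≤ C ‖u‖_{L²}^{3/p − 1/2} ‖∇u‖_{L²}^{3/2 − 3/p}`. -/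
theorem gagliardo_nirenberg_whole_space :
    ∃ C : ℝ, 0 < C ∧ ∀ (p : ℝ), 2 ≤ p → p ≤ 6 →
      ∀ u : E3 → ℝ, ContDiff ℝ 1 u → HasCompactSupport u →
        eLpNorm u (ENNReal.ofReal p) volume ≤
          ENNReal.ofReal C * eLpNorm u 2 volume ^ (3/p - 1/2)
            * eLpNorm (fun x => ‖fderiv ℝ u x‖) 2 volume ^ (3/2 - 3/p) := by
  
  set K : ℝ≥0 :=
    eLpNormLESNormFDerivOfEqInnerConst (volume : Measure (EuclideanSpace ℝ (Fin 3))) 2 with hK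
  refine ⟨(K : ℝ) + 1, by positivity, fun p h2 h6 u hu h2u => ?_⟩
  have hτ0 : (0:ℝ) ≤ 3/2 - 3/p := by
    have : 3/p ≤ 3/2 := by
      apply div_le_div_of_nonneg_left (by norm_num) (by norm_num) h2
    linarith
  have hτ1 : (3:ℝ)/2 - 3/p ≤ 1 := by
    have : (1:ℝ)/2 ≤ 3/p := by
      rw [div_le_div_iff₀ (by norm_num) (by linarith)]; linarith
    linarith
  have hD : eLpNorm (fun x => ‖fderiv ℝ u x‖) 2 volume = eLpNorm (fderiv ℝ u) 2 volume :=
    eLpNorm_norm _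
  have hKC : (K : ℝ≥0∞) ^ ((3:ℝ)/2 - 3/p) ≤ ENNReal.ofReal ((K:ℝ) + 1) := by
    have hC1 : (1:ℝ≥0∞) ≤ ENNReal.ofReal ((K:ℝ) + 1) := by
      rw [ENNReal.one_le_ofReal]; have := K.coe_nonneg; linarith
    have hKC' : (K : ℝ≥0∞) ≤ ENNReal.ofReal ((K:ℝ) + 1) := by
      rw [ENNReal.ofReal_add (by positivity) (by norm_num), ENNReal.ofReal_coe_nnreal]
      simp
    rcases le_total ((K : ℝ≥0∞)) 1 with h | h
    · exact le_trans (by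
        calc (K : ℝ≥0∞) ^ ((3:ℝ)/2 - 3/p) ≤ (1:ℝ≥0∞) ^ ((3:ℝ)/2 - 3/p) :=
              ENNReal.rpow_le_rpow h hτ0
          _ = 1 := ENNReal.one_rpow _) hC1
    · calc (K : ℝ≥0∞) ^ ((3:ℝ)/2 - 3/p) ≤ (K : ℝ≥0∞) ^ (1:ℝ) :=
          ENNReal.rpow_le_rpow_of_exponent_le h hτ1
        _ = K := ENNReal.rpow_one _
        _ ≤ _ := hKC'
  calc eLpNorm u (ENNReal.ofReal p) volume
      ≤ eLpNorm u 2 volume ^ (3/p - 1/2) * eLpNorm u 6 volume ^ (3/2 - 3/p) :=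
        interp_L2_L6 hu.continuous.aemeasurable h2 h6
    _ ≤ eLpNorm u 2 volume ^ (3/p - 1/2)
          * ((K : ℝ≥0∞) * eLpNorm (fderiv ℝ u) 2 volume) ^ (3/2 - 3/p) := by
        gcongr
        exact sobolev_L6 hu h2u
    _ = eLpNorm u 2 volume ^ (3/p - 1/2)
          * ((K : ℝ≥0∞) ^ (3/2 - 3/p) * eLpNorm (fderiv ℝ u) 2 volume ^ (3/2 - 3/p)) := by
        rw [ENNReal.mul_rpow_of_nonneg _ _ hτ0]
    _ ≤ eLpNorm u 2 volume ^ (3/p - 1/2)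
          * (ENNReal.ofReal ((K:ℝ) + 1) * eLpNorm (fderiv ℝ u) 2 volume ^ (3/2 - 3/p)) := by
        gcongr
    _ = ENNReal.ofReal ((K:ℝ) + 1) * eLpNorm u 2 volume ^ (3/p - 1/2)
          * eLpNorm (fun x => ‖fderiv ℝ u x‖) 2 volume ^ (3/2 - 3/p) := by
        rw [hD]; ring
end
end

section
/- (Gronwall-type lemma.) Let f and g be nonnegative continuous functions on [0, ∞), with f differentiable, satisfying (1/2) d/dt (f(t)²) ≤ f(t) g(t) for all t ≥ 0. Then for every t ≥ 0 one has f(t) ≤ f(0) + ∫₀ᵗ g(t′) dt′. -/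
open MeasureTheory
open scoped ENNReal

noncomputable section

/-- **Gronwall-type lemma.**
If `f, g ≥ 0` are continuous on `[0,∞)`, `f` is differentiable there, and
`(1/2) (f²)′(t) ≤ f(t) g(t)` for `t ≥ 0`, then `f(t) ≤ f(0) + ∫₀ᵗ g`. -/
theorem gronwall_lemma (f g : ℝ → ℝ)
    (hf0 : ∀ t, 0 ≤ t → 0 ≤ f t) (hg0 : ∀ t, 0 ≤ t → 0 ≤ g t)
    (hfc : ContinuousOn f (Set.Ici 0)) (hgc : ContinuousOn g (Set.Ici 0))
    (hfd : ∀ t, 0 ≤ t → DifferentiableAt ℝ f t)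
    (hineq : ∀ t, 0 ≤ t → (1/2) * deriv (fun s => f s ^ 2) t ≤ f t * g t) :
    ∀ t, 0 ≤ t → f t ≤ f 0 + ∫ s in (0:ℝ)..t, g s := by
  intro t ht
  -- interval integrability of g on [0, t]
  have hgint : IntervalIntegrable g volume 0 t := by
    apply ContinuousOn.intervalIntegrable
    apply hgc.mono
    rw [Set.uIcc_of_le ht]
    exact fun x hx => hx.1
  -- key: f*f' ≤ f*g for s ≥ 0
  have hkey : ∀ s, 0 ≤ s → f s * deriv f s ≤ f s * g s := by
    intro s hs
    have hd : deriv (fun x => f x ^ 2) s = 2 * f s * deriv f s := by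
      have := ((hfd s hs).hasDerivAt.fun_pow 2).deriv
      rw [this]; ring
    have := hineq s hs
    rw [hd] at this
    linarith
  -- main estimate with regularization
  have main : ∀ ε : ℝ, 0 < ε → f t ≤ f 0 + ε + ∫ s in (0:ℝ)..t, g s := by
    intro ε hε
    set φ : ℝ → ℝ := fun s => Real.sqrt (f s ^ 2 + ε ^ 2) with hφ
    have hpos : ∀ s, (0:ℝ) < f s ^ 2 + ε ^ 2 := fun s => by positivity
    have hφpos : ∀ s, 0 < φ s := fun s => Real.sqrt_pos.2 (hpos s)
    have hφderiv : ∀ s, 0 ≤ s → HasDerivAt φ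
        (f s * deriv f s / Real.sqrt (f s ^ 2 + ε ^ 2)) s := by
      intro s hs
      have h1 : HasDerivAt (fun x => f x ^ 2 + ε ^ 2) (2 * f s * deriv f s) s := by
        have := ((hfd s hs).hasDerivAt.fun_pow 2).add_const (ε ^ 2)
        exact this.congr_deriv (by push_cast; ring)
      have h2 := (Real.hasDerivAt_sqrt (ne_of_gt (hpos s))).comp s h1
      refine h2.congr_deriv ?_
      field_simp
    have hφle : ∀ s, 0 ≤ s →
        f s * deriv f s / Real.sqrt (f s ^ 2 + ε ^ 2) ≤ g s := by
      intro s hs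
      have hsq : (0:ℝ) < Real.sqrt (f s ^ 2 + ε ^ 2) := hφpos s
      have hfle : f s ≤ Real.sqrt (f s ^ 2 + ε ^ 2) := by
        have : f s ^ 2 ≤ f s ^ 2 + ε ^ 2 := le_add_of_nonneg_right (by positivity)
        calc f s = Real.sqrt (f s ^ 2) := by
                rw [Real.sqrt_sq (hf0 s hs)]
          _ ≤ _ := Real.sqrt_le_sqrt this
      have h1 : f s * deriv f s ≤ f s * g s := hkey s hs
      have h2 : f s * deriv f s / Real.sqrt (f s ^ 2 + ε ^ 2) ≤
          f s * g s / Real.sqrt (f s ^ 2 + ε ^ 2) := by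
        gcongr
      refine h2.trans ?_
      rw [div_le_iff₀ hsq]
      have := mul_le_mul_of_nonneg_left hfle (hg0 s hs)
      nlinarith [hg0 s hs]
    -- F s = φ 0 + ∫₀ˢ g - φ s is monotone on [0,t]
    set F : ℝ → ℝ := fun s => φ 0 + (∫ x in (0:ℝ)..s, g x) - φ s with hF
    have hφcont : ContinuousOn φ (Set.Icc 0 t) := by
      apply ContinuousOn.sqrt
      exact (((hfc.mono (fun x hx => hx.1)).pow 2).add continuousOn_const)
    have hprim : ContinuousOn (fun s => ∫ x in (0:ℝ)..s, g x) (Set.Icc 0 t) := by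
      have := intervalIntegral.continuousOn_primitive_interval'
        (μ := volume) hgint (Set.left_mem_uIcc)
      apply this.mono
      rw [Set.uIcc_of_le ht]
    have hFcont : ContinuousOn F (Set.Icc 0 t) :=
      (continuousOn_const.add hprim).sub hφcont
    have hFD : ∀ x ∈ Set.Ioo (0:ℝ) t, HasDerivAt F
        (g x - f x * deriv f x / Real.sqrt (f x ^ 2 + ε ^ 2)) x := by
      intro x hx
      have hgint2 : IntervalIntegrable g volume 0 x := by
        apply hgint.mono_set
        rw [Set.uIcc_of_le (le_of_lt hx.1), Set.uIcc_of_le ht]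
        exact Set.Icc_subset_Icc le_rfl (le_of_lt hx.2)
      have hmeas : StronglyMeasurableAtFilter g (nhds x) volume :=
        (hgc.mono (fun y (hy : y ∈ Set.Ioi (0:ℝ)) => Set.mem_Ici.2 (le_of_lt hy))).stronglyMeasurableAtFilter
          isOpen_Ioi x hx.1
      have hcg : ContinuousAt g x :=
        hgc.continuousAt (Ici_mem_nhds hx.1)
      have hI := intervalIntegral.integral_hasDerivAt_right hgint2 hmeas hcg
      have := ((hasDerivAt_const x (φ 0)).add hI).sub (hφderiv x (le_of_lt hx.1))
      simp at this; exact this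
    have hmono : MonotoneOn F (Set.Icc 0 t) := by
      apply monotoneOn_of_deriv_nonneg (convex_Icc 0 t) hFcont
      · intro x hx
        rw [interior_Icc] at hx
        exact ((hFD x hx).differentiableAt).differentiableWithinAt
      · intro x hx
        rw [interior_Icc] at hx
        rw [(hFD x hx).deriv]
        have := hφle x (le_of_lt hx.1)
        linarith
    have hF0 : F 0 = 0 := by simp [hF]
    have hFt : 0 ≤ F t := by
      have := hmono (Set.left_mem_Icc.2 ht) (Set.right_mem_Icc.2 ht) ht
      rw [hF0] at this; exact this
    -- conclude
    have hφt : f t ≤ φ t := by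
      have : f t ^ 2 ≤ f t ^ 2 + ε ^ 2 := le_add_of_nonneg_right (by positivity)
      calc f t = Real.sqrt (f t ^ 2) := by rw [Real.sqrt_sq (hf0 t ht)]
        _ ≤ φ t := Real.sqrt_le_sqrt this
    have hφ0 : φ 0 ≤ f 0 + ε := by
      have h1 : f 0 ^ 2 + ε ^ 2 ≤ (f 0 + ε) ^ 2 := by
        nlinarith [hf0 0 le_rfl, hε.le]
      calc φ 0 ≤ Real.sqrt ((f 0 + ε) ^ 2) := Real.sqrt_le_sqrt h1
        _ = f 0 + ε := Real.sqrt_sq (by have := hf0 0 le_rfl; linarith)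
    have : φ t ≤ φ 0 + ∫ x in (0:ℝ)..t, g x := by
      simp only [hF] at hFt; linarith
    linarith
  -- take ε → 0
  by_contra h
  push_neg at h
  obtain ⟨ε, hε, hε2⟩ : ∃ ε > 0, f 0 + ε + (∫ s in (0:ℝ)..t, g s) < f t :=
    ⟨(f t - (f 0 + ∫ s in (0:ℝ)..t, g s)) / 2, by linarith, by linarith⟩
  exact absurd (main ε hε) (not_le.2 hε2)
end
end
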